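/- With F_i (1 ≤ i ≤ N), F̂, and F_∞ = 1_{(N+1)m} − F̂ as in the definition of q-convolution, the subspace L = ker(F̂ − (1 − q^λ)·1_{(N+1)m}) ⊆ ℂ^{(N+1)m} is invariant under each F_j (1 ≤ j ≤ N) and under F_∞. -/
import Mathlib


/-- The subspace `L = ker(F̂ − (1 − q^λ)·1)` is invariant under each `F_j`
(1 ≤ j ≤ N) and under `F_∞ = 1 − F̂`, where `c` denotes `q^λ`. -/
theorem qmc_L_invariant (m N : ℕ) (c : ℂ)
    (B : Fin (N + 1) → Matrix (Fin m) (Fin m) ℂ)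
    (F : Fin N → (Fin (N + 1) → Fin m → ℂ) → (Fin (N + 1) → Fin m → ℂ))
    (hF : ∀ k v, F k v = fun r =>
      if r = k.succ then (∑ j, (B j).mulVec (v j)) - (1 - c) • v k.succ else 0)
    (Fhat : (Fin (N + 1) → Fin m → ℂ) → (Fin (N + 1) → Fin m → ℂ))
    (hFhat : ∀ v, Fhat v = fun _ => ∑ j, (B j).mulVec (v j))
    (Finf : (Fin (N + 1) → Fin m → ℂ) → (Fin (N + 1) → Fin m → ℂ))
    (hFinf : ∀ v, Finf v = v - Fhat v)
    (L : Set (Fin (N + 1) → Fin m → ℂ))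
    (hL : L = {v | Fhat v = (1 - c) • v}) :
    (∀ k, ∀ v ∈ L, F k v ∈ L) ∧ (∀ v ∈ L, Finf v ∈ L) := by
  subst hL
  have hsum : ∀ v ∈ {v | Fhat v = (1 - c) • v}, ∀ r : Fin (N+1),
      (∑ j, (B j).mulVec (v j)) = (1 - c) • v r := by
    intro v hv r
    have := congrFun (hv.symm.trans (hFhat v)) r
    simpa [Pi.smul_apply] using this.symm
  constructor
  · intro k v hv
    have hz : F k v = 0 := by
      rw [hF]
      funext r
      by_cases h : r = k.succ
      · simp [h, hsum v hv k.succ]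
      · simp [h]
    rw [hz]
    show Fhat 0 = (1 - c) • (0 : Fin (N+1) → Fin m → ℂ)
    rw [hFhat]
    funext r
    simp [Matrix.mulVec_zero]
  · intro v hv
    have hFv : Finf v = c • v := by
      rw [hFinf, hv]
      funext r
      simp [Pi.smul_apply, sub_smul, one_smul]
    rw [hFv]
    show Fhat (c • v) = (1 - c) • (c • v)
    rw [hFhat]
    funext r
    have := hsum v hv r
    calc (∑ j, (B j).mulVec ((c • v) j))
        = c • ∑ j, (B j).mulVec (v j) := by
          rw [Finset.smul_sum]
          congr 1; funext j
          simp [Matrix.mulVec_smul]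
      _ = ((1 - c) • (c • v)) r := by
          rw [this]; funext i; simp [Pi.smul_apply]; ring
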